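/- (Lemma S1, general sufficient condition for δ-perfect learning.) Let ε > 0, ε̄ ∈ (0,1), ρ > 0, ρ̄ > 0, and J ≥ 1. Let f_1, …, f_J : ℕ → ℝ be functions with f_1(n) ≥ f_2(n) ≥ ⋯ ≥ f_J(n) ≥ 1 for all n, each monotone nondecreasing in n. For each n let k_1^n, …, k_n^n be natural numbers with k_i^n ≥ 1, and let b_n^1, …, b_n^J ∈ [0,1] with b_n^1 + ⋯ + b_n^J ≤ 1 satisfy: |{i ≤ n : k_i^n ≥ f_1(n)}|/n ≥ b_n^1, and for each j ∈ {2,…,J}, |{i ≤ n : f_{j−1}(n) > k_i^n ≥ f_j(n)}|/n ≥ b_n^j. Suppose (a) lim_{n→∞} ∑_{j=1}^J b_n^j = 1, and (b) for each j ∈ {1,…,J}, lim_{n→∞} b_n^j·(1 − erf(ε·√((ρ + ρ̄·f_j(n))/2))) = 0. Then there exists a sequence (δ_n) of nonnegative reals with δ_n → 0 such that for every n, (1/n)·∑_{i=1}^n erf(ε·√((ρ + ρ̄·k_i^n)/2)) ≥ 1 − δ_n·ε̄; hence δ-perfect learning occurs. -/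

import Mathlib

open Filter
open scoped Classical

/-- The error function `erf x = (2/√π) ∫₀ˣ e^{-t²} dt`. -/
noncomputable def erf (x : ℝ) : ℝ :=
  (2 / Real.sqrt Real.pi) * ∫ t in (0:ℝ)..x, Real.exp (-t ^ 2)

lemma erf_mono : Monotone erf := by
  intro x y hxy
  unfold erf
  have hc : ∀ a b : ℝ, IntervalIntegrable (fun t : ℝ => Real.exp (-t ^ 2))
      MeasureTheory.volume a b := fun a b =>
    (Real.continuous_exp.comp (by continuity)).intervalIntegrable a b
  have hadd := intervalIntegral.integral_add_adjacent_intervals (hc 0 x) (hc x y)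
  have hnn : 0 ≤ ∫ t in x..y, Real.exp (-t ^ 2) :=
    intervalIntegral.integral_nonneg hxy (fun t _ => (Real.exp_pos _).le)
  have h2 : (0:ℝ) ≤ 2 / Real.sqrt Real.pi :=
    div_nonneg (by norm_num) (Real.sqrt_nonneg _)
  have : (∫ t in (0:ℝ)..x, Real.exp (-t ^ 2)) ≤ ∫ t in (0:ℝ)..y, Real.exp (-t ^ 2) := by
    rw [← hadd]; linarith
  exact mul_le_mul_of_nonneg_left this h2

lemma erf_nonneg {x : ℝ} (hx : 0 ≤ x) : 0 ≤ erf x := by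
  have h0 : erf 0 = 0 := by simp [erf]
  rw [← h0]; exact erf_mono hx

/-- Lemma S1: general sufficient condition for δ-perfect learning.
Given cutoff functions `f 0 ≥ f 1 ≥ … ≥ f (J-1) ≥ 1` (each nondecreasing in `n`)
and lower bounds `b n j` on the fraction of agents with `k` in the band
`[f j n, f (j-1) n)` (resp. `[f 0 n, ∞)` for `j = 0`), if the `b n j` sum to `1`
in the limit and `b n j (1 - erf(ε√((ρ + ρ̄ f j n)/2))) → 0` for each `j < J`,
then there is a vanishing nonnegative sequence `δ_n` for which the sufficient
condition `(1/n) ∑ᵢ erf(ε√((ρ + ρ̄ kᵢⁿ)/2)) ≥ 1 - δ_n ε̄` for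
`(ε, ε̄, δ_n)`-learning holds for every `n ≥ 1`; hence δ-perfect learning occurs. -/
theorem stmt_12 (ε εbar ρ ρbar : ℝ) (hε : 0 < ε) (hεbar : εbar ∈ Set.Ioo (0:ℝ) 1)
    (hρ : 0 < ρ) (hρbar : 0 < ρbar)
    (J : ℕ) (hJ : 1 ≤ J)
    (f : ℕ → ℕ → ℝ)
    (hf_mono : ∀ j < J, Monotone (f j))
    (hf_ord : ∀ n : ℕ, ∀ j : ℕ, j + 1 < J → f (j + 1) n ≤ f j n)
    (hf_one : ∀ n : ℕ, ∀ j < J, 1 ≤ f j n)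
    (k : (n : ℕ) → Fin n → ℕ) (hk : ∀ n i, 1 ≤ k n i)
    (b : ℕ → ℕ → ℝ)
    (hb01 : ∀ n : ℕ, ∀ j < J, b n j ∈ Set.Icc (0:ℝ) 1)
    (hbsum : ∀ n : ℕ, ∑ j ∈ Finset.range J, b n j ≤ 1)
    (hfrac0 : ∀ n : ℕ, 1 ≤ n →
      b n 0 ≤ ((Finset.univ.filter fun i : Fin n => f 0 n ≤ (k n i : ℝ)).card : ℝ) / n)
    (hfracj : ∀ n : ℕ, 1 ≤ n → ∀ j : ℕ, 1 ≤ j → j < J →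
      b n j ≤ ((Finset.univ.filter fun i : Fin n =>
          (k n i : ℝ) < f (j - 1) n ∧ f j n ≤ (k n i : ℝ)).card : ℝ) / n)
    (ha : Tendsto (fun n => ∑ j ∈ Finset.range J, b n j) atTop (nhds 1))
    (hbvanish : ∀ j < J, Tendsto (fun n => b n j *
        (1 - erf (ε * Real.sqrt ((ρ + ρbar * f j n) / 2)))) atTop (nhds 0)) :
    ∃ δ : ℕ → ℝ, (∀ n, 0 ≤ δ n) ∧ Tendsto δ atTop (nhds 0) ∧
      ∀ n : ℕ, 1 ≤ n →
        1 - δ n * εbar ≤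
          (1 / n : ℝ) * ∑ i : Fin n, erf (ε * Real.sqrt ((ρ + ρbar * k n i) / 2)) := by
  set E : ℕ → ℕ → ℝ := fun j n => erf (ε * Real.sqrt ((ρ + ρbar * f j n) / 2)) with hE
  set g : ℕ → ℝ := fun n =>
    (1 - ∑ j ∈ Finset.range J, b n j) + ∑ j ∈ Finset.range J, b n j * (1 - E j n) with hg
  have hεbar0 : (0:ℝ) < εbar := hεbar.1
  refine ⟨fun n => max 0 (g n / εbar), fun n => le_max_left _ _, ?_, ?_⟩
  · -- tendsto
    have h1 : Tendsto (fun n => 1 - ∑ j ∈ Finset.range J, b n j) atTop (nhds 0) := by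
      have := ha.const_sub 1
      simpa using this
    have h2 : Tendsto (fun n => ∑ j ∈ Finset.range J, b n j * (1 - E j n)) atTop (nhds 0) := by
      have := tendsto_finset_sum (Finset.range J)
        (fun j hj => hbvanish j (Finset.mem_range.mp hj))
      simpa only [Finset.sum_const_zero] using this
    have hgt : Tendsto g atTop (nhds 0) := by simpa using h1.add h2
    have : Tendsto (fun n => max 0 (g n / εbar)) atTop (nhds (max 0 (0 / εbar))) :=
      tendsto_const_nhds.max (hgt.div_const εbar)
    simpa using this
  · intro n hn
    have hn0 : (0:ℝ) < n := by exact_mod_cast hn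
    set e : Fin n → ℝ := fun i => erf (ε * Real.sqrt ((ρ + ρbar * (k n i : ℝ)) / 2)) with he
    have e_nonneg : ∀ i, 0 ≤ e i := fun i =>
      erf_nonneg (mul_nonneg hε.le (Real.sqrt_nonneg _))
    have E_nonneg : ∀ j, 0 ≤ E j n := fun j =>
      erf_nonneg (mul_nonneg hε.le (Real.sqrt_nonneg _))
    -- chain: f j' n ≤ f j n for j ≤ j' < J
    have hf_chain : ∀ j j' : ℕ, j ≤ j' → j' < J → f j' n ≤ f j n := by
      intro j j' hle hlt
      induction j', hle using Nat.le_induction with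
      | base => exact le_refl _
      | succ m hm ih =>
        exact le_trans (hf_ord n m hlt) (ih (by omega))
    -- the bands
    set A : ℕ → Finset (Fin n) := fun j =>
      if j = 0 then Finset.univ.filter (fun i => f 0 n ≤ (k n i : ℝ))
      else Finset.univ.filter (fun i => (k n i : ℝ) < f (j - 1) n ∧ f j n ≤ (k n i : ℝ))
      with hA
    have hA_lb : ∀ j, ∀ i ∈ A j, f j n ≤ (k n i : ℝ) := by
      intro j i hi
      by_cases h : j = 0
      · subst h; simp only [hA, if_pos rfl, Finset.mem_filter] at hi; exact hi.2
      · simp only [hA, if_neg h, Finset.mem_filter] at hi; exact hi.2.2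
    have hA_ub : ∀ j, j ≠ 0 → ∀ i ∈ A j, (k n i : ℝ) < f (j - 1) n := by
      intro j h i hi
      simp only [hA, if_neg h, Finset.mem_filter] at hi; exact hi.2.1
    have hA_card : ∀ j < J, (n : ℝ) * b n j ≤ (A j).card := by
      intro j hj
      by_cases h : j = 0
      · subst h
        have := hfrac0 n hn
        rw [le_div_iff₀ hn0] at this
        have hcast : A 0 = Finset.univ.filter (fun i => f 0 n ≤ (k n i : ℝ)) := by
          simp [hA]
        rw [hcast]; linarith
      · have := hfracj n hn j (Nat.one_le_iff_ne_zero.mpr h) hj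
        rw [le_div_iff₀ hn0] at this
        have hcast : A j = Finset.univ.filter
            (fun i => (k n i : ℝ) < f (j - 1) n ∧ f j n ≤ (k n i : ℝ)) := by
          simp [hA, h]
        rw [hcast]; linarith
    have hdisj : ∀ j1 ∈ Finset.range J, ∀ j2 ∈ Finset.range J, j1 ≠ j2 →
        Disjoint (A j1) (A j2) := by
      have key : ∀ j1 j2, j1 < j2 → j2 < J → Disjoint (A j1) (A j2) := by
        intro j1 j2 hlt hJ2
        rw [Finset.disjoint_left]
        intro i hi1 hi2
        have h1 : f j1 n ≤ (k n i : ℝ) := hA_lb j1 i hi1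
        have h2 : (k n i : ℝ) < f (j2 - 1) n := hA_ub j2 (by omega) i hi2
        have h3 : f (j2 - 1) n ≤ f j1 n := hf_chain j1 (j2 - 1) (by omega) (by omega)
        linarith
      intro j1 hj1 j2 hj2 hne
      rcases lt_or_gt_of_ne hne with h | h
      · exact key j1 j2 h (Finset.mem_range.mp hj2)
      · exact (key j2 j1 h (Finset.mem_range.mp hj1)).symm
    -- key inequality
    have hEe : ∀ j, ∀ i ∈ A j, E j n ≤ e i := by
      intro j i hi
      apply erf_mono
      apply mul_le_mul_of_nonneg_left _ hε.le
      apply Real.sqrt_le_sqrt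
      have := hA_lb j i hi
      nlinarith
    have key : ∑ j ∈ Finset.range J, (n : ℝ) * b n j * E j n ≤ ∑ i : Fin n, e i := by
      calc ∑ j ∈ Finset.range J, (n : ℝ) * b n j * E j n
          ≤ ∑ j ∈ Finset.range J, ∑ i ∈ A j, e i := by
            apply Finset.sum_le_sum
            intro j hj
            have h1 : ((A j).card : ℝ) * E j n ≤ ∑ i ∈ A j, e i := by
              have := Finset.card_nsmul_le_sum (A j) e (E j n) (hEe j)
              simpa [nsmul_eq_mul] using this
            calc (n : ℝ) * b n j * E j n
                ≤ ((A j).card : ℝ) * E j n :=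
                  mul_le_mul_of_nonneg_right (hA_card j (Finset.mem_range.mp hj)) (E_nonneg j)
              _ ≤ ∑ i ∈ A j, e i := h1
        _ = ∑ i ∈ (Finset.range J).biUnion A, e i := (Finset.sum_biUnion hdisj).symm
        _ ≤ ∑ i : Fin n, e i :=
            Finset.sum_le_sum_of_subset_of_nonneg (Finset.subset_univ _)
              (fun i _ _ => e_nonneg i)
    -- conclude
    have hgoal1 : 1 - g n = ∑ j ∈ Finset.range J, b n j * E j n := by
      have h3 : ∑ j ∈ Finset.range J, b n j * (1 - E j n) =
          ∑ j ∈ Finset.range J, b n j - ∑ j ∈ Finset.range J, b n j * E j n := by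
        rw [← Finset.sum_sub_distrib]
        exact Finset.sum_congr rfl (fun j _ => by ring)
      simp only [hg]
      linarith
    have hdiv : ∑ j ∈ Finset.range J, b n j * E j n ≤
        (1 / n : ℝ) * ∑ i : Fin n, e i := by
      have h4 : ∑ j ∈ Finset.range J, b n j * E j n =
          (1 / n : ℝ) * ∑ j ∈ Finset.range J, (n : ℝ) * b n j * E j n := by
        rw [Finset.mul_sum]
        exact Finset.sum_congr rfl (fun j _ => by field_simp)
      rw [h4]
      exact mul_le_mul_of_nonneg_left key (by positivity)
    have hδg : g n ≤ max 0 (g n / εbar) * εbar := by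
      have h5 : g n / εbar ≤ max 0 (g n / εbar) := le_max_right _ _
      have := mul_le_mul_of_nonneg_right h5 hεbar0.le
      rwa [div_mul_cancel₀ _ (ne_of_gt hεbar0)] at this
    have hfinal : 1 - max 0 (g n / εbar) * εbar ≤ (1 / (n:ℝ)) * ∑ i : Fin n, e i := by
      calc 1 - max 0 (g n / εbar) * εbar ≤ 1 - g n := by linarith
        _ = ∑ j ∈ Finset.range J, b n j * E j n := hgoal1
        _ ≤ (1 / (n:ℝ)) * ∑ i : Fin n, e i := hdiv
    exact hfinal
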